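/- Let X (T×S), V (S×K'), S_c (K'×K) be real matrices, W = Q_W * R_W an R×K matrix with Q_W isometric (Q_Wᵀ Q_W = 1) and R_W an L×K matrix, and let Q be a real T×m matrix. Set B := X * V * S_c * Wᵀ. Then ‖B − Q * Qᵀ * B‖₂ = ‖(1 − Q*Qᵀ) * X * V * S_c * R_Wᵀ‖₂ ≤ ‖(1 − Q*Qᵀ) * X * V‖₂ * ‖S_c * Wᵀ‖₂. -/

import Mathlib

open Matrix
open scoped Matrix.Norms.L2Operator

private lemma conjT_eq_transpose {α β : Type*} [Fintype α] [Fintype β]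
    (A : Matrix α β ℝ) : Aᴴ = Aᵀ := by
  ext i j; simp [Matrix.conjTranspose_apply]

private lemma norm_mul_isometry {α R L : Type*} [Fintype α] [DecidableEq α]
    [Fintype R] [DecidableEq R] [Fintype L] [DecidableEq L]
    (Q_W : Matrix R L ℝ) (hQW : Q_Wᵀ * Q_W = 1) (A : Matrix α L ℝ) :
    ‖A * Q_Wᵀ‖ = ‖A‖ := by
  have h1 : ‖(A * Q_Wᵀ)ᴴᴴ * (A * Q_Wᵀ)ᴴ‖ = ‖(A * Q_Wᵀ)ᴴ‖ * ‖(A * Q_Wᵀ)ᴴ‖ :=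
    Matrix.l2_opNorm_conjTranspose_mul_self _
  have h2 : ‖Aᴴᴴ * Aᴴ‖ = ‖Aᴴ‖ * ‖Aᴴ‖ := Matrix.l2_opNorm_conjTranspose_mul_self _
  have e1 : (A * Q_Wᵀ)ᴴᴴ * (A * Q_Wᵀ)ᴴ = Aᴴᴴ * Aᴴ := by
    simp only [conjTranspose_conjTranspose, conjT_eq_transpose, Matrix.transpose_mul,
      Matrix.transpose_transpose]
    calc A * Q_Wᵀ * (Q_W * Aᵀ) = A * (Q_Wᵀ * Q_W) * Aᵀ := by
          simp [Matrix.mul_assoc]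
      _ = A * Aᵀ := by rw [hQW, Matrix.mul_one]
  rw [e1, h2, Matrix.l2_opNorm_conjTranspose] at h1
  rw [Matrix.l2_opNorm_conjTranspose] at h1
  have := norm_nonneg (A * Q_Wᵀ)
  have := norm_nonneg A
  nlinarith [h1]

/-- Error control for a product block `B = X V S_c Wᵀ`: the basis-weight factorization
`W = Q_W R_W` turns the projection error into a computable small-matrix expression,
bounded by the product of the projection error of `X V` and `‖S_c Wᵀ‖₂`. -/
theorem stmt_16 {T S K' K R L m : Type*}
    [Fintype T] [DecidableEq T] [Fintype S] [DecidableEq S]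
    [Fintype K'] [DecidableEq K'] [Fintype K] [DecidableEq K]
    [Fintype R] [DecidableEq R] [Fintype L] [DecidableEq L]
    [Fintype m] [DecidableEq m]
    (X : Matrix T S ℝ) (V : Matrix S K' ℝ) (S_c : Matrix K' K ℝ)
    (W : Matrix R K ℝ) (Q_W : Matrix R L ℝ) (R_W : Matrix L K ℝ)
    (hQW : Q_Wᵀ * Q_W = 1) (hW : W = Q_W * R_W)
    (Q : Matrix T m ℝ) :
    ‖X * V * S_c * Wᵀ - Q * Qᵀ * (X * V * S_c * Wᵀ)‖ =
        ‖(1 - Q * Qᵀ) * X * V * S_c * R_Wᵀ‖ ∧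
      ‖(1 - Q * Qᵀ) * X * V * S_c * R_Wᵀ‖ ≤ ‖(1 - Q * Qᵀ) * X * V‖ * ‖S_c * Wᵀ‖ := by
  have hWt : Wᵀ = R_Wᵀ * Q_Wᵀ := by rw [hW, Matrix.transpose_mul]
  have e0 : X * V * S_c * Wᵀ - Q * Qᵀ * (X * V * S_c * Wᵀ) =
      ((1 - Q * Qᵀ) * X * V * S_c * R_Wᵀ) * Q_Wᵀ := by
    rw [hWt]
    simp only [Matrix.sub_mul, Matrix.one_mul, Matrix.mul_assoc]
  have eW : ‖S_c * Wᵀ‖ = ‖S_c * R_Wᵀ‖ := by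
    rw [hWt, ← Matrix.mul_assoc, norm_mul_isometry Q_W hQW]
  constructor
  · rw [e0, norm_mul_isometry Q_W hQW]
  · rw [eW]
    calc ‖(1 - Q * Qᵀ) * X * V * S_c * R_Wᵀ‖
        = ‖((1 - Q * Qᵀ) * X * V) * (S_c * R_Wᵀ)‖ := by rw [Matrix.mul_assoc, Matrix.mul_assoc]
      _ ≤ ‖(1 - Q * Qᵀ) * X * V‖ * ‖S_c * R_Wᵀ‖ := Matrix.l2_opNorm_mul _ _
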